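/- For p an odd prime, Mochizuki's 3-cocycle θ(x_1,x_2,x_3) = (x_2 - x_1)(2x_3^p - x_2^p - (2x_3 - x_2)^p)/p, evaluated in Z/pZ on the cycle Σ_{i=0}^{p-1} (0, i, i+j) (with lifts to integers), equals -j² (mod p). -/

import Mathlib

open Finset

lemma sum_cast_range (p : ℕ) [NeZero p] (f : ZMod p → ZMod p) :
    ∑ i ∈ Finset.range p, f (i : ZMod p) = ∑ x : ZMod p, f x := by
  exact Finset.sum_nbij' (fun i => (i : ZMod p)) ZMod.val (fun a _ => Finset.mem_univ _)
    (fun a _ => Finset.mem_range.mpr (ZMod.val_lt a))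
    (fun a ha => ZMod.val_cast_of_lt (Finset.mem_range.mp ha))
    (fun a _ => ZMod.natCast_rightInverse a) (fun a _ => rfl)

lemma sum_pow_range (p : ℕ) [Fact p.Prime] (m : ℕ) (hm : m ≠ 0) :
    ∑ i ∈ Finset.range p, ((i : ZMod p)) ^ m = if (p - 1) ∣ m then -1 else 0 := by
  classical
  rw [sum_cast_range p (fun x => x ^ m)]
  let φ : (ZMod p)ˣ ↪ ZMod p := ⟨fun x ↦ x, Units.val_injective⟩
  have himg : univ.map φ = univ \ {0} := by
    ext x
    simpa only [mem_map, mem_univ, Function.Embedding.coeFn_mk, true_and, mem_sdiff,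
      mem_singleton, φ] using
        (show (∃ a : (ZMod p)ˣ, (a : ZMod p) = x) ↔ x ≠ 0 from isUnit_iff_ne_zero)
  calc ∑ x : ZMod p, x ^ m = ∑ x ∈ univ \ {(0 : ZMod p)}, x ^ m := by
        rw [← sum_sdiff (({0} : Finset (ZMod p)).subset_univ), sum_singleton, zero_pow hm,
          add_zero]
    _ = ∑ x : (ZMod p)ˣ, (x : ZMod p) ^ m := by simp [φ, ← himg, univ.sum_map φ]
    _ = _ := by rw [FiniteField.sum_pow_units (ZMod p) m, ZMod.card]
open Finset

/-- Evaluation of Mochizuki's 3-cocycle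
`θ(x₁,x₂,x₃) = (x₂ - x₁)(2x₃^p - x₂^p - (2x₃ - x₂)^p)/p` on the cycle
`Σ_{i=0}^{p-1} (0, i, i+j)` equals `-j²` in `ZMod p`. -/
theorem mochizuki_evaluation (p : ℕ) (hp : p.Prime) (hodd : Odd p) (j : ℤ) :
    ((∑ i ∈ Finset.range p,
        ((i : ℤ) - 0) *
          ((2 * ((i : ℤ) + j) ^ p - (i : ℤ) ^ p - (2 * ((i : ℤ) + j) - (i : ℤ)) ^ p) /
            (p : ℤ)) : ℤ) : ZMod p) = -(j : ZMod p) ^ 2 := by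
  haveI : Fact p.Prime := ⟨hp⟩
  obtain ⟨n, rfl⟩ : ∃ n, p = n + 2 := ⟨p - 2, by have := hp.two_le; omega⟩
  have hp0 : ((n + 2 : ℕ) : ℤ) ≠ 0 := by positivity
  set c : ℕ → ℤ := fun k => (((n + 2).choose k : ℤ) * (2 - 2 ^ (n + 2 - k))) / (n + 2 : ℕ)
    with hcdef
  have hc : ∀ k ∈ Finset.range (n + 1),
      ((n + 2 : ℕ) : ℤ) * c k = (((n + 2).choose k : ℤ)) * (2 - 2 ^ (n + 2 - k)) := by
    intro k hk
    have hk' : k < n + 1 := Finset.mem_range.mp hk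
    have hdvd : ((n + 2 : ℕ) : ℤ) ∣ (((n + 2).choose k : ℤ)) * (2 - 2 ^ (n + 2 - k)) := by
      rcases Nat.eq_zero_or_pos k with h0 | h0
      · subst h0
        refine Dvd.dvd.mul_left ?_ _
        have h2 : ((2 - 2 ^ (n + 2 - 0) : ℤ) : ZMod (n + 2)) = 0 := by
          push_cast
          rw [ZMod.pow_card]
          ring
        exact (ZMod.intCast_zmod_eq_zero_iff_dvd _ (n + 2)).mp h2
      · refine Dvd.dvd.mul_right ?_ _
        exact_mod_cast Int.natCast_dvd_natCast.mpr
          (hp.dvd_choose_self h0.ne' (by omega))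
    exact Int.mul_ediv_cancel' hdvd
  -- per-i identity for the exact division
  have key : ∀ i : ℤ,
      (2 * (i + j) ^ (n + 2) - i ^ (n + 2) - (2 * (i + j) - i) ^ (n + 2)) / ((n + 2 : ℕ) : ℤ)
        = ∑ k ∈ Finset.range (n + 1), c k * i ^ k * j ^ (n + 2 - k) := by
    intro i
    have h1 : 2 * (i + j) - i = i + 2 * j := by ring
    rw [h1]
    have expand : 2 * (i + j) ^ (n + 2) - i ^ (n + 2) - (i + 2 * j) ^ (n + 2)
        = ((n + 2 : ℕ) : ℤ) * ∑ k ∈ Finset.range (n + 1), c k * i ^ k * j ^ (n + 2 - k) := by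
      rw [Finset.mul_sum]
      have hterm : ∀ k ∈ Finset.range (n + 1),
          ((n + 2 : ℕ) : ℤ) * (c k * i ^ k * j ^ (n + 2 - k))
            = (((n + 2).choose k : ℤ)) * (2 - 2 ^ (n + 2 - k)) * (i ^ k * j ^ (n + 2 - k)) := by
        intro k hk
        rw [show ((n + 2 : ℕ) : ℤ) * (c k * i ^ k * j ^ (n + 2 - k))
            = (((n + 2 : ℕ) : ℤ) * c k) * (i ^ k * j ^ (n + 2 - k)) by ring, hc k hk]
      rw [Finset.sum_congr rfl hterm]
      rw [add_pow, add_pow, Finset.mul_sum]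
      rw [show (n : ℕ) + 2 + 1 = n + 1 + 1 + 1 from rfl]
      rw [sub_right_comm, ← Finset.sum_sub_distrib]
      rw [Finset.sum_range_succ, Finset.sum_range_succ]
      have e1 : n + 2 - (n + 1) = 1 := by omega
      have e2 : n + 2 - (n + 1 + 1) = 0 := by omega
      rw [e1, e2]
      rw [show (n : ℕ) + 1 + 1 = n + 2 from rfl]
      simp only [Nat.choose_self, pow_zero, pow_one, Nat.cast_one]
      have hsum : ∀ k ∈ Finset.range (n + 1),
          2 * (i ^ k * j ^ (n + 2 - k) * (((n + 2).choose k : ℤ)))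
              - i ^ k * (2 * j) ^ (n + 2 - k) * (((n + 2).choose k : ℤ))
            = (((n + 2).choose k : ℤ)) * (2 - 2 ^ (n + 2 - k)) * (i ^ k * j ^ (n + 2 - k)) := by
        intro k _
        rw [mul_pow]
        ring
      rw [Finset.sum_congr rfl hsum]
      ring
    rw [expand, Int.mul_ediv_cancel_left _ hp0]
  have step1 : (∑ i ∈ Finset.range (n + 2), ((i : ℤ) - 0) *
        ((2 * ((i : ℤ) + j) ^ (n + 2) - (i : ℤ) ^ (n + 2)
            - (2 * ((i : ℤ) + j) - (i : ℤ)) ^ (n + 2)) / ((n + 2 : ℕ) : ℤ)))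
      = ∑ i ∈ Finset.range (n + 2), ∑ k ∈ Finset.range (n + 1),
          (i : ℤ) * (c k * (i : ℤ) ^ k * j ^ (n + 2 - k)) := by
    refine Finset.sum_congr rfl fun i _ => ?_
    rw [key, sub_zero, Finset.mul_sum]
  rw [step1]
  push_cast
  rw [Finset.sum_comm]
  have step2 : ∀ k ∈ Finset.range (n + 1),
      (∑ i ∈ Finset.range (n + 2),
        (i : ZMod (n + 2)) * ((c k : ZMod (n + 2)) * (i : ZMod (n + 2)) ^ k
          * (j : ZMod (n + 2)) ^ (n + 2 - k)))
      = (c k : ZMod (n + 2)) * (j : ZMod (n + 2)) ^ (n + 2 - k) *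
          (if (n + 2 - 1) ∣ (k + 1) then -1 else 0) := by
    intro k _
    rw [← sum_pow_range (n + 2) (k + 1) (Nat.succ_ne_zero k), Finset.mul_sum]
    refine Finset.sum_congr rfl fun i _ => ?_
    rw [pow_succ]
    ring
  rw [Finset.sum_congr rfl step2]
  have e3 : n + 2 - 1 = n + 1 := by omega
  rw [Finset.sum_eq_single_of_mem n (Finset.self_mem_range_succ n)]
  · have e4 : n + 2 - n = 2 := by omega
    have hcn : c n = -((n : ℤ) + 1) := by
      have h := hc n (Finset.self_mem_range_succ n)
      rw [e4] at h
      have hch : (((n + 2).choose n : ℤ)) * 2 = ((n : ℤ) + 2) * ((n : ℤ) + 1) := by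
        have hf := Nat.choose_mul_factorial_mul_factorial (Nat.le_add_right n 2)
        rw [show n + 2 - n = 2 by omega] at hf
        have hf' := congrArg (Nat.cast : ℕ → ℤ) hf
        push_cast [Nat.factorial_succ, Nat.factorial_zero] at hf'
        have hfac : (n.factorial : ℤ) ≠ 0 := by exact_mod_cast n.factorial_pos.ne'
        refine mul_right_cancel₀ hfac ?_
        linear_combination hf'
      have h2 : ((n + 2 : ℕ) : ℤ) * c n = ((n + 2 : ℕ) : ℤ) * (-((n : ℤ) + 1)) := by
        rw [h]
        have hpcast : ((n + 2 : ℕ) : ℤ) = (n : ℤ) + 2 := by push_cast; ring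
        linear_combination (-1 : ℤ) * hch + ((n : ℤ) + 1) * hpcast
      exact mul_left_cancel₀ hp0 h2
    rw [e3, e4, hcn, if_pos (dvd_refl (n + 1))]
    have hpz : ((n : ZMod (n + 2)) + 2) = 0 := by
      have h5 := ZMod.natCast_self (n + 2)
      push_cast at h5
      linear_combination h5
    push_cast
    linear_combination ((j : ZMod (n + 2)) ^ 2) * hpz
  · intro k hk hkn
    have hk' : k < n + 1 := Finset.mem_range.mp hk
    rw [e3, if_neg, mul_zero]
    intro hdd
    have := Nat.le_of_dvd (Nat.succ_pos k) hdd
    omega
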